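/- Let f : ℝⁿ → ℝ be of class C² in a neighborhood of x̄ with all coordinates positive, suppose p̄ᵢ + λ̄·∂f/∂xᵢ(x̄) = 0 for all i with p̄ having all positive coordinates, f(x̄) = ȳ, and the determinant of the bordered Hessian of f at x̄ is nonzero. Let φ = (λ(·,·), x(·,·)) : V → W be a C¹ map on a neighborhood V of (p̄, ȳ) such that for (p,y) ∈ V, φ(p,y) is the unique point (λ, x) in W satisfying pᵢ + λ·fᵢ(x) = 0 for all i and f(x) = y, and define the cost function C(p, y) = Σᵢ pᵢ·xᵢ(p, y). Then for all i, j = 1,…,n, the Allen elasticity of substitution satisfies σ^A_{ij}(x̄) = C(p̄, ȳ)·∂²C/∂pᵢ∂p_j(p̄, ȳ) / (∂C/∂pᵢ(p̄, ȳ) · ∂C/∂p_j(p̄, ȳ)) (Uzawa's form), provided ∂C/∂pᵢ(p̄, ȳ) and ∂C/∂p_j(p̄, ȳ) are nonzero. -/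

import Mathlib

/-- Partial derivative of `f : ℝⁿ → ℝ` with respect to the `i`-th variable. -/
noncomputable def pderiv1 (n : ℕ) (f : (Fin n → ℝ) → ℝ) (i : Fin n) (x : Fin n → ℝ) : ℝ :=
  fderiv ℝ f x (Pi.single i 1)

/-- Second partial derivative `f_{ij}` of `f : ℝⁿ → ℝ`. -/
noncomputable def pderiv2 (n : ℕ) (f : (Fin n → ℝ) → ℝ) (i j : Fin n) (x : Fin n → ℝ) : ℝ :=
  pderiv1 n (pderiv1 n f j) i x

/-- The bordered Hessian of `f` at `x`: the `(n+1) × (n+1)` matrix with `(0,0)` entry `0`,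
the rest of row 0 and column 0 given by the gradient of `f`, and lower-right `n × n`
block the Hessian of `f`. -/
noncomputable def borderedHessian (n : ℕ) (f : (Fin n → ℝ) → ℝ) (x : Fin n → ℝ) :
    Matrix (Fin (n + 1)) (Fin (n + 1)) ℝ :=
  Matrix.of fun i j =>
    Fin.cases
      (Fin.cases (0 : ℝ) (fun j' => pderiv1 n f j' x) j)
      (fun i' => Fin.cases (pderiv1 n f i' x) (fun j' => pderiv2 n f i' j' x) j) i

/-- The cofactor of the `(i,j)` entry of an `(m+1) × (m+1)` real matrix. -/
noncomputable def cofactor {m : ℕ} (M : Matrix (Fin (m + 1)) (Fin (m + 1)) ℝ)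
    (i j : Fin (m + 1)) : ℝ :=
  (-1 : ℝ) ^ ((i : ℕ) + (j : ℕ)) * (M.submatrix i.succAbove j.succAbove).det

/-- The Allen elasticity of substitution of factors `i` and `j` at `x`. -/
noncomputable def AES (n : ℕ) (f : (Fin n → ℝ) → ℝ) (x : Fin n → ℝ) (i j : Fin n) : ℝ :=
  ((∑ k, x k * pderiv1 n f k x) / (x i * x j)) *
    (cofactor (borderedHessian n f x) i.succ j.succ / (borderedHessian n f x).det)

open Filter

/- ### Auxiliary lemmas -/

lemma clm_apply_eq_sum {n : ℕ} (L : (Fin n → ℝ) →L[ℝ] ℝ) (u : Fin n → ℝ) :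
    L u = ∑ k, u k * L (Pi.single k 1) := by
  have h : u = ∑ k, u k • (Pi.single k 1 : Fin n → ℝ) := by
    funext j
    simp [Pi.single_apply]
  conv_lhs => rw [h]
  rw [map_sum]
  simp [smul_eq_mul]

lemma adjugate_eq_cofactor {m : ℕ} (M : Matrix (Fin (m + 1)) (Fin (m + 1)) ℝ)
    (a b : Fin (m + 1)) : M.adjugate a b = cofactor M b a := by
  rw [Matrix.adjugate_apply, Matrix.det_succ_row _ b, cofactor]
  rw [Finset.sum_eq_single a (fun c _ hc => by
      simp [Matrix.updateRow_self, Pi.single_apply, hc.symm])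
    (by simp)]
  simp [Matrix.updateRow_self, Pi.single_apply]

lemma fderiv_apply_eq_sum_pderiv1 {n : ℕ} (g : (Fin n → ℝ) → ℝ) (y u) :
    fderiv ℝ g y u = ∑ k, u k * pderiv1 n g k y :=
  clm_apply_eq_sum _ u

lemma pderiv1_contDiffAt {n : ℕ} {f : (Fin n → ℝ) → ℝ} {y : Fin n → ℝ}
    (hf : ContDiffAt ℝ 2 f y) (k : Fin n) : ContDiffAt ℝ 1 (pderiv1 n f k) y := by
  have h1 : ContDiffAt ℝ 1 (fderiv ℝ f) y := hf.fderiv_right (by norm_num)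
  exact h1.clm_apply contDiffAt_const

lemma pderiv2_symm {n : ℕ} {f : (Fin n → ℝ) → ℝ} {x : Fin n → ℝ}
    (hf : ContDiffAt ℝ 2 f x) (a b : Fin n) :
    pderiv2 n f a b x = pderiv2 n f b a x := by
  have hd : DifferentiableAt ℝ (fderiv ℝ f) x :=
    (hf.fderiv_right (by norm_num : (1:WithTop ℕ∞) + 1 ≤ 2)).differentiableAt one_ne_zero
  have key : ∀ u v : Fin n → ℝ,
      fderiv ℝ (fun y => fderiv ℝ f y v) x u = fderiv ℝ (fderiv ℝ f) x u v := by
    intro u v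
    rw [fderiv_clm_apply hd (differentiableAt_const v)]
    simp
  show fderiv ℝ (fun y => fderiv ℝ f y (Pi.single b 1)) x (Pi.single a 1)
      = fderiv ℝ (fun y => fderiv ℝ f y (Pi.single a 1)) x (Pi.single b 1)
  rw [key, key]
  exact hf.isSymmSndFDerivAt (by rw [minSmoothness_of_isRCLikeNormedField]) _ _

/-- **Uzawa's form of the Allen elasticity of substitution.** -/
theorem AES_uzawa_form (n : ℕ) (f : (Fin n → ℝ) → ℝ)
    (xbar pbar : Fin n → ℝ) (lbar ybar : ℝ)
    (hxpos : ∀ i, 0 < xbar i) (hppos : ∀ i, 0 < pbar i)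
    (hC2 : ∀ᶠ z in nhds xbar, ContDiffAt ℝ 2 f z)
    (hcrit : ∀ i, pbar i + lbar * pderiv1 n f i xbar = 0)
    (hout : f xbar = ybar)
    (hF : (borderedHessian n f xbar).det ≠ 0)
    (V : Set ((Fin n → ℝ) × ℝ)) (W : Set (ℝ × (Fin n → ℝ)))
    (φ : (Fin n → ℝ) × ℝ → ℝ × (Fin n → ℝ))
    (hV : IsOpen V) (hW : IsOpen W)
    (hVmem : (pbar, ybar) ∈ V) (hWmem : (lbar, xbar) ∈ W)
    (hφ : ContDiffOn ℝ 1 φ V) (hmaps : Set.MapsTo φ V W)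
    (huniq : ∀ p y, (p, y) ∈ V → ∀ l x, (l, x) ∈ W →
      (((∀ i, p i + l * pderiv1 n f i x = 0) ∧ f x = y) ↔ (l, x) = φ (p, y)))
    (C : (Fin n → ℝ) × ℝ → ℝ)
    (hC : ∀ z, C z = ∑ i, z.1 i * (φ z).2 i)
    (i j : Fin n)
    (hCi : fderiv ℝ C (pbar, ybar) (Pi.single i 1, 0) ≠ 0)
    (hCj : fderiv ℝ C (pbar, ybar) (Pi.single j 1, 0) ≠ 0) :
    AES n f xbar i j =
      C (pbar, ybar) *
          fderiv ℝ (fun z => fderiv ℝ C z (Pi.single i 1, 0)) (pbar, ybar)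
            (Pi.single j 1, 0) /
        (fderiv ℝ C (pbar, ybar) (Pi.single i 1, 0) *
          fderiv ℝ C (pbar, ybar) (Pi.single j 1, 0)) := by
  -- Basic facts
  have hlbar : lbar ≠ 0 := by
    intro h
    have := hcrit i
    rw [h, zero_mul, add_zero] at this
    exact (hxpos i).ne' (by linarith [hppos i, this]) |>.elim
  have hφbase : φ (pbar, ybar) = (lbar, xbar) :=
    ((huniq pbar ybar hVmem lbar xbar hWmem).mp ⟨hcrit, hout⟩).symm
  have hEqs : ∀ z ∈ V, (∀ k, z.1 k + (φ z).1 * pderiv1 n f k ((φ z).2) = 0) ∧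
      f ((φ z).2) = z.2 := by
    intro z hz
    exact (huniq z.1 z.2 (by simpa using hz) (φ z).1 (φ z).2
      (by simpa using hmaps hz)).mpr (by simp)
  obtain ⟨U₀, hU₀sub, hU₀open, hU₀mem⟩ :
      ∃ U₀, (∀ y ∈ U₀, ContDiffAt ℝ 2 f y) ∧ IsOpen U₀ ∧ xbar ∈ U₀ := by
    obtain ⟨t, ht, hto, htm⟩ := eventually_nhds_iff.mp hC2
    exact ⟨t, ht, hto, htm⟩
  have hφdiff : ∀ z ∈ V, DifferentiableAt ℝ φ z := fun z hz =>
    (hφ.contDiffAt (hV.mem_nhds hz)).differentiableAt one_ne_zero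
  -- Shephard's lemma at any suitable point
  have hShep : ∀ z, z ∈ V → (φ z).2 ∈ U₀ → ∀ i' : Fin n,
      fderiv ℝ C z (Pi.single i' 1, 0) = (φ z).2 i' := by
    intro z hzV hzU i'
    have hφz : HasFDerivAt φ (fderiv ℝ φ z) z := (hφdiff z hzV).hasFDerivAt
    set Dφz := fderiv ℝ φ z with hDφz
    have hxx : HasFDerivAt (fun w => (φ w).2)
        ((ContinuousLinearMap.snd ℝ ℝ (Fin n → ℝ)).comp Dφz) z :=
      (ContinuousLinearMap.snd ℝ ℝ (Fin n → ℝ)).hasFDerivAt.comp z hφz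
    have hfd : DifferentiableAt ℝ f ((φ z).2) :=
      (hU₀sub _ hzU).differentiableAt (by norm_num)
    have hcomp : HasFDerivAt (fun w => f ((φ w).2))
        ((fderiv ℝ f ((φ z).2)).comp
          ((ContinuousLinearMap.snd ℝ ℝ (Fin n → ℝ)).comp Dφz)) z :=
      hfd.hasFDerivAt.comp z hxx
    have hev : (fun w => f ((φ w).2)) =ᶠ[nhds z] (fun w => w.2) := by
      filter_upwards [hV.mem_nhds hzV] with w hw using (hEqs w hw).2
    have hkey : ∀ v : (Fin n → ℝ) × ℝ,
        fderiv ℝ f ((φ z).2) ((Dφz v).2) = v.2 := by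
      intro v
      have h1 := hcomp.fderiv
      have h2 : fderiv ℝ (fun w : (Fin n → ℝ) × ℝ => w.2) z
          = ContinuousLinearMap.snd ℝ (Fin n → ℝ) ℝ :=
        (ContinuousLinearMap.snd ℝ (Fin n → ℝ) ℝ).hasFDerivAt.fderiv
      have h3 := Filter.EventuallyEq.fderiv_eq (𝕜 := ℝ) hev
      rw [h1, h2] at h3
      have := DFunLike.congr_fun h3 v
      simpa using this
    -- derivative of C
    have hCfun : C = fun w => ∑ k,
        (((ContinuousLinearMap.proj k).comp
          (ContinuousLinearMap.fst ℝ (Fin n → ℝ) ℝ)) w) * (φ w).2 k := by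
      funext w
      rw [hC w]
      rfl
    have hCd : HasFDerivAt C
        (∑ k, ((z.1 k) • ((ContinuousLinearMap.proj k).comp
            ((ContinuousLinearMap.snd ℝ ℝ (Fin n → ℝ)).comp Dφz))
          + ((φ z).2 k) • ((ContinuousLinearMap.proj k).comp
            (ContinuousLinearMap.fst ℝ (Fin n → ℝ) ℝ)))) z := by
      rw [hCfun]
      refine HasFDerivAt.fun_sum fun k _ => ?_
      have h1 : HasFDerivAt
          (fun w : (Fin n → ℝ) × ℝ => ((ContinuousLinearMap.proj k).comp
            (ContinuousLinearMap.fst ℝ (Fin n → ℝ) ℝ)) w)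
          ((ContinuousLinearMap.proj k).comp
            (ContinuousLinearMap.fst ℝ (Fin n → ℝ) ℝ)) z :=
        ((ContinuousLinearMap.proj k).comp
          (ContinuousLinearMap.fst ℝ (Fin n → ℝ) ℝ)).hasFDerivAt
      have h2 : HasFDerivAt (fun w => (φ w).2 k)
          ((ContinuousLinearMap.proj k).comp
            ((ContinuousLinearMap.snd ℝ ℝ (Fin n → ℝ)).comp Dφz)) z :=
        (ContinuousLinearMap.proj (R := ℝ) (φ := fun _ : Fin n => ℝ) k).hasFDerivAt.comp z hxx
      simpa using h1.fun_mul h2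
    rw [hCd.fderiv]
    have hexp : (∑ k, ((z.1 k) • ((ContinuousLinearMap.proj k).comp
            ((ContinuousLinearMap.snd ℝ ℝ (Fin n → ℝ)).comp Dφz))
          + ((φ z).2 k) • ((ContinuousLinearMap.proj k).comp
            (ContinuousLinearMap.fst ℝ (Fin n → ℝ) ℝ))))
          ((Pi.single i' 1, 0) : (Fin n → ℝ) × ℝ)
        = ∑ k, (z.1 k * (Dφz ((Pi.single i' 1, 0) : (Fin n → ℝ) × ℝ)).2 k
            + (φ z).2 k * (Pi.single i' 1 : Fin n → ℝ) k) := by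
      rw [ContinuousLinearMap.sum_apply]
      refine Finset.sum_congr rfl fun k _ => ?_
      simp
    rw [hexp]
    have hsplit : ∀ k : Fin n, z.1 k * (Dφz ((Pi.single i' 1, 0) : (Fin n → ℝ) × ℝ)).2 k
        = -((φ z).1 * (pderiv1 n f k ((φ z).2)
            * (Dφz ((Pi.single i' 1, 0) : (Fin n → ℝ) × ℝ)).2 k)) := by
      intro k
      have := (hEqs z hzV).1 k
      have hz1 : z.1 k = -((φ z).1 * pderiv1 n f k ((φ z).2)) := by linarith
      rw [hz1]; ring
    rw [Finset.sum_add_distrib]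
    have h4 : ∑ k, z.1 k * (Dφz ((Pi.single i' 1, 0) : (Fin n → ℝ) × ℝ)).2 k = 0 := by
      rw [Finset.sum_congr rfl fun k _ => hsplit k]
      rw [Finset.sum_neg_distrib, ← Finset.mul_sum]
      have h5 : ∑ k, pderiv1 n f k ((φ z).2)
          * (Dφz ((Pi.single i' 1, 0) : (Fin n → ℝ) × ℝ)).2 k
          = fderiv ℝ f ((φ z).2) ((Dφz ((Pi.single i' 1, 0) : (Fin n → ℝ) × ℝ)).2) := by
        rw [fderiv_apply_eq_sum_pderiv1]
        exact Finset.sum_congr rfl fun k _ => mul_comm _ _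
      rw [h5, hkey]
      simp
    rw [h4, zero_add]
    rw [Finset.sum_eq_single i' (fun k _ hk => by
      simp [Pi.single_apply, hk]) (by simp)]
    simp
  -- setup at the base point
  have hxx2 : (φ (pbar, ybar)).2 = xbar := by rw [hφbase]
  have hll2 : (φ (pbar, ybar)).1 = lbar := by rw [hφbase]
  have hbaseU : (φ (pbar, ybar)).2 ∈ U₀ := by rw [hxx2]; exact hU₀mem
  have hnhd : ∀ᶠ z in nhds (pbar, ybar), z ∈ V ∧ (φ z).2 ∈ U₀ := by
    have h1 : ∀ᶠ z in nhds (pbar, ybar), z ∈ V := hV.mem_nhds hVmem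
    have hcont : ContinuousAt φ (pbar, ybar) := (hφdiff _ hVmem).continuousAt
    have h2 : ∀ᶠ z in nhds (pbar, ybar), (φ z).2 ∈ U₀ :=
      hcont.snd (hU₀open.mem_nhds hbaseU)
    exact h1.and h2
  have hShepEvi : (fun z => fderiv ℝ C z ((Pi.single i 1, 0) : (Fin n → ℝ) × ℝ))
      =ᶠ[nhds (pbar, ybar)] (fun z => (φ z).2 i) := by
    filter_upwards [hnhd] with z hz using hShep z hz.1 hz.2 i
  have hCi_eq : fderiv ℝ C (pbar, ybar) ((Pi.single i 1, 0) : (Fin n → ℝ) × ℝ)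
      = xbar i := by
    have := hShep _ hVmem hbaseU i
    rw [hxx2] at this
    exact this
  have hCj_eq : fderiv ℝ C (pbar, ybar) ((Pi.single j 1, 0) : (Fin n → ℝ) × ℝ)
      = xbar j := by
    have := hShep _ hVmem hbaseU j
    rw [hxx2] at this
    exact this
  -- derivative of φ at the base point
  have hφb : HasFDerivAt φ (fderiv ℝ φ (pbar, ybar)) (pbar, ybar) :=
    (hφdiff _ hVmem).hasFDerivAt
  set Dφ := fderiv ℝ φ (pbar, ybar) with hDφdef
  have hxxb : HasFDerivAt (fun w => (φ w).2)
      ((ContinuousLinearMap.snd ℝ ℝ (Fin n → ℝ)).comp Dφ) (pbar, ybar) :=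
    (ContinuousLinearMap.snd ℝ ℝ (Fin n → ℝ)).hasFDerivAt.comp _ hφb
  set uj := ((Pi.single j 1, 0) : (Fin n → ℝ) × ℝ) with hujdef
  set a := (Dφ uj).1 with hadef
  set b := (Dφ uj).2 with hbdef
  -- second derivative of the cost function equals `b i`
  have h2nd : fderiv ℝ (fun z => fderiv ℝ C z ((Pi.single i 1, 0) : (Fin n → ℝ) × ℝ))
      (pbar, ybar) uj = b i := by
    have hc : HasFDerivAt (fun z => (φ z).2 i)
        ((ContinuousLinearMap.proj (R := ℝ) (φ := fun _ : Fin n => ℝ) i).comp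
          ((ContinuousLinearMap.snd ℝ ℝ (Fin n → ℝ)).comp Dφ)) (pbar, ybar) :=
      (ContinuousLinearMap.proj (R := ℝ) (φ := fun _ : Fin n => ℝ) i).hasFDerivAt.comp _ hxxb
    rw [Filter.EventuallyEq.fderiv_eq (𝕜 := ℝ) hShepEvi, hc.fderiv]
    simp [hbdef]
  -- row 0 of the linear system
  have hE0 : ∑ l, b l * pderiv1 n f l xbar = 0 := by
    have hfd : DifferentiableAt ℝ f xbar :=
      (hU₀sub _ hU₀mem).differentiableAt (by norm_num)
    have hfd' : HasFDerivAt f (fderiv ℝ f xbar) ((φ (pbar, ybar)).2) := by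
      rw [hxx2]; exact hfd.hasFDerivAt
    have hcomp : HasFDerivAt (fun w => f ((φ w).2))
        ((fderiv ℝ f xbar).comp
          ((ContinuousLinearMap.snd ℝ ℝ (Fin n → ℝ)).comp Dφ)) (pbar, ybar) :=
      hfd'.comp (pbar, ybar) hxxb
    have hev : (fun w => f ((φ w).2)) =ᶠ[nhds (pbar, ybar)] (fun w => w.2) := by
      filter_upwards [hV.mem_nhds hVmem] with w hw using (hEqs w hw).2
    have h3 := Filter.EventuallyEq.fderiv_eq (𝕜 := ℝ) hev
    have h2 : fderiv ℝ (fun w : (Fin n → ℝ) × ℝ => w.2) (pbar, ybar)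
        = ContinuousLinearMap.snd ℝ (Fin n → ℝ) ℝ :=
      (ContinuousLinearMap.snd ℝ (Fin n → ℝ) ℝ).hasFDerivAt.fderiv
    rw [hcomp.fderiv, h2] at h3
    have h4 := DFunLike.congr_fun h3 uj
    have h5 : fderiv ℝ f xbar b = 0 := by simpa [hbdef, hujdef] using h4
    rw [fderiv_apply_eq_sum_pderiv1] at h5
    exact h5
  -- rows 1..n of the linear system
  have hEk : ∀ k : Fin n, (Pi.single j 1 : Fin n → ℝ) k
      + (lbar * ∑ l, b l * pderiv2 n f l k xbar + pderiv1 n f k xbar * a) = 0 := by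
    intro k
    have hgk : DifferentiableAt ℝ (pderiv1 n f k) xbar :=
      (pderiv1_contDiffAt (hU₀sub _ hU₀mem) k).differentiableAt one_ne_zero
    have hgk' : HasFDerivAt (pderiv1 n f k) (fderiv ℝ (pderiv1 n f k) xbar)
        ((φ (pbar, ybar)).2) := by
      rw [hxx2]; exact hgk.hasFDerivAt
    have hgx : HasFDerivAt (fun w => pderiv1 n f k ((φ w).2))
        ((fderiv ℝ (pderiv1 n f k) xbar).comp
          ((ContinuousLinearMap.snd ℝ ℝ (Fin n → ℝ)).comp Dφ)) (pbar, ybar) :=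
      by have := hgk'.comp (pbar, ybar) hxxb; exact this
    have hlam : HasFDerivAt (fun w => (φ w).1)
        ((ContinuousLinearMap.fst ℝ ℝ (Fin n → ℝ)).comp Dφ) (pbar, ybar) :=
      (ContinuousLinearMap.fst ℝ ℝ (Fin n → ℝ)).hasFDerivAt.comp _ hφb
    have hmul := hlam.fun_mul hgx
    have h1 : HasFDerivAt (fun w : (Fin n → ℝ) × ℝ => w.1 k)
        ((ContinuousLinearMap.proj (R := ℝ) (φ := fun _ : Fin n => ℝ) k).comp
          (ContinuousLinearMap.fst ℝ (Fin n → ℝ) ℝ)) (pbar, ybar) :=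
      ((ContinuousLinearMap.proj (R := ℝ) (φ := fun _ : Fin n => ℝ) k).comp
        (ContinuousLinearMap.fst ℝ (Fin n → ℝ) ℝ)).hasFDerivAt
    have hsum := h1.fun_add hmul
    have hev : (fun w : (Fin n → ℝ) × ℝ =>
        w.1 k + (φ w).1 * pderiv1 n f k ((φ w).2)) =ᶠ[nhds (pbar, ybar)]
        (fun _ => (0 : ℝ)) := by
      filter_upwards [hV.mem_nhds hVmem] with w hw using (hEqs w hw).1 k
    have hzero : fderiv ℝ (fun w : (Fin n → ℝ) × ℝ =>
        w.1 k + (φ w).1 * pderiv1 n f k ((φ w).2)) (pbar, ybar) = 0 := by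
      rw [Filter.EventuallyEq.fderiv_eq (𝕜 := ℝ) hev]
      exact fderiv_const_apply 0
    have heq := hsum.fderiv
    rw [hzero] at heq
    have happ := DFunLike.congr_fun heq.symm uj
    have hfb : fderiv ℝ (pderiv1 n f k) xbar b
        = ∑ l, b l * pderiv2 n f l k xbar := by
      rw [fderiv_apply_eq_sum_pderiv1]
      rfl
    rw [← hfb]
    simpa [hujdef, hadef, hbdef, hll2, hxx2, Pi.single_apply] using happ
  -- the matrix of the linear system
  have hcds : ContDiffAt ℝ 2 f xbar := hU₀sub _ hU₀mem
  have hsymm2 : ∀ a' b' : Fin n, pderiv2 n f a' b' xbar = pderiv2 n f b' a' xbar :=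
    fun a' b' => pderiv2_symm hcds a' b'
  set BH := borderedHessian n f xbar with hBHdef
  set d : Fin (n + 1) → ℝ := fun r => if r = 0 then lbar⁻¹ else 1 with hddef
  set M : Matrix (Fin (n + 1)) (Fin (n + 1)) ℝ
    := lbar • (Matrix.diagonal d * BH * Matrix.diagonal d) with hMdef
  have hMentry : ∀ r c, M r c = lbar * (d r * (BH r c * d c)) := by
    intro r c
    rw [hMdef]
    simp [Matrix.smul_apply, Matrix.mul_diagonal, Matrix.diagonal_mul, mul_assoc]
  have hBH00 : BH 0 0 = 0 := by simp [hBHdef, borderedHessian]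
  have hBH0s : ∀ l : Fin n, BH 0 l.succ = pderiv1 n f l xbar := by
    intro l; simp [hBHdef, borderedHessian]
  have hBHs0 : ∀ k : Fin n, BH k.succ 0 = pderiv1 n f k xbar := by
    intro k; simp [hBHdef, borderedHessian]
  have hBHss : ∀ k l : Fin n, BH k.succ l.succ = pderiv2 n f k l xbar := by
    intro k l; simp [hBHdef, borderedHessian]
  have hd0 : d 0 = lbar⁻¹ := by simp [hddef]
  have hds : ∀ k : Fin n, d k.succ = 1 := by
    intro k; simp [hddef, Fin.succ_ne_zero]
  have hM00 : M 0 0 = 0 := by rw [hMentry, hBH00]; ring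
  have hM0s : ∀ l, M 0 l.succ = pderiv1 n f l xbar := by
    intro l; rw [hMentry, hBH0s, hd0, hds]; field_simp
  have hMs0 : ∀ k, M k.succ 0 = pderiv1 n f k xbar := by
    intro k; rw [hMentry, hBHs0, hd0, hds]; field_simp
  have hMss : ∀ k l, M k.succ l.succ = lbar * pderiv2 n f k l xbar := by
    intro k l; rw [hMentry, hBHss, hds, hds]; ring
  set vw : Fin (n + 1) → ℝ := Fin.cases a b with hvwdef
  have hvw0 : vw 0 = a := rfl
  have hvws : ∀ k : Fin n, vw k.succ = b k := fun k => by
    simp [hvwdef]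
  have hMw : M.mulVec vw = Pi.single j.succ (-1) := by
    funext r
    have hmv : ∀ r' : Fin (n + 1), (M.mulVec vw) r' = ∑ c, M r' c * vw c := by
      intro r'
      simp [Matrix.mulVec, dotProduct]
    refine Fin.cases ?_ (fun k => ?_) r
    · rw [hmv, Fin.sum_univ_succ, hM00, hvw0]
      have : ∑ l : Fin n, M 0 l.succ * vw l.succ = ∑ l, b l * pderiv1 n f l xbar := by
        refine Finset.sum_congr rfl fun l _ => ?_
        rw [hM0s, hvws]; ring
      rw [this, hE0]
      rw [Pi.single_eq_of_ne (Fin.succ_ne_zero j).symm]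
      ring
    · rw [hmv, Fin.sum_univ_succ, hMs0, hvw0]
      have : ∑ l : Fin n, M k.succ l.succ * vw l.succ
          = lbar * ∑ l, b l * pderiv2 n f l k xbar := by
        rw [Finset.mul_sum]
        refine Finset.sum_congr rfl fun l _ => ?_
        rw [hMss, hvws, hsymm2 k l]; ring
      rw [this]
      have hP : (Pi.single j.succ (-1) : Fin (n + 1) → ℝ) k.succ
          = -((Pi.single j 1 : Fin n → ℝ) k) := by
        rcases eq_or_ne k j with h | h
        · subst h; simp
        · rw [Pi.single_eq_of_ne (fun hc => h (Fin.succ_injective n hc)),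
            Pi.single_eq_of_ne h]
          ring
      rw [hP]
      linarith [hEk k]
  -- Cramer's rule
  have hcram : M.det • vw = M.adjugate.mulVec (Pi.single j.succ (-1)) := by
    have h1 : M.adjugate.mulVec (M.mulVec vw) = M.det • vw := by
      rw [Matrix.mulVec_mulVec, Matrix.adjugate_mul, Matrix.smul_mulVec,
        Matrix.one_mulVec]
    rw [hMw] at h1
    exact h1.symm
  have hbi0 : M.det * b i = M.adjugate i.succ j.succ * (-1) := by
    have h1 := congrFun hcram i.succ
    rw [Matrix.mulVec_single] at h1
    simpa [hvws] using h1
  -- determinant and adjugate of M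
  have hdetd : (Matrix.diagonal d).det = lbar⁻¹ := by
    rw [Matrix.det_diagonal, Fin.prod_univ_succ, hd0]
    simp [hds]
  have hdetM : M.det = lbar ^ (n + 1) * (lbar⁻¹ * (BH.det * lbar⁻¹)) := by
    rw [hMdef, Matrix.det_smul, Matrix.det_mul, Matrix.det_mul, hdetd, Fintype.card_fin]
    ring
  have herase : ∀ r : Fin n, ∏ s ∈ Finset.univ.erase r.succ, d s = lbar⁻¹ := by
    intro r
    rw [Finset.prod_eq_single_of_mem 0
      (Finset.mem_erase.mpr ⟨(Fin.succ_ne_zero r).symm, Finset.mem_univ _⟩)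
      (fun s _ hs => by simp [hddef, hs])]
    exact hd0
  have hadjM : M.adjugate i.succ j.succ
      = lbar ^ n * (lbar⁻¹ * (BH.adjugate i.succ j.succ * lbar⁻¹)) := by
    rw [hMdef, Matrix.adjugate_smul, Matrix.adjugate_mul_distrib,
      Matrix.adjugate_mul_distrib, Matrix.adjugate_diagonal, Fintype.card_fin]
    simp only [Matrix.smul_apply, Matrix.diagonal_mul, Matrix.mul_diagonal,
      Nat.add_sub_cancel, smul_eq_mul]
    rw [herase, herase]
  -- solve for `b i`
  have hbi : b i = -(BH.adjugate i.succ j.succ) / (lbar * BH.det) := by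
    have hp : (lbar : ℝ) ^ n ≠ 0 := pow_ne_zero _ hlbar
    have h := hbi0
    rw [hdetM, hadjM] at h
    have h2 : lbar ^ n * (lbar * (BH.det * b i))
        = lbar ^ n * -(BH.adjugate i.succ j.succ) := by
      field_simp [pow_succ] at h
      linear_combination h
    have h3 := mul_left_cancel₀ hp h2
    have hld : lbar * BH.det ≠ 0 := mul_ne_zero hlbar hF
    field_simp
    linarith [h3]
  -- symmetry of the bordered Hessian
  have hBHT : BH.transpose = BH := by
    funext r c
    refine Fin.cases ?_ (fun k => ?_) r
    · refine Fin.cases ?_ (fun l => ?_) c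
      · rfl
      · rw [Matrix.transpose_apply, hBHs0, hBH0s]
    · refine Fin.cases ?_ (fun l => ?_) c
      · rw [Matrix.transpose_apply, hBH0s, hBHs0]
      · rw [Matrix.transpose_apply, hBHss, hBHss]
        exact hsymm2 l k
  have hadjsym : BH.adjugate i.succ j.succ = cofactor BH i.succ j.succ := by
    have h1 : BH.adjugate.transpose = BH.adjugate := by
      rw [Matrix.adjugate_transpose, hBHT]
    have h2 : BH.adjugate i.succ j.succ = BH.adjugate j.succ i.succ := by
      conv_lhs => rw [← h1]
      exact Matrix.transpose_apply _ _ _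
    rw [h2]
    exact adjugate_eq_cofactor BH j.succ i.succ
  -- value of the cost function at the base point
  have hCbase : C (pbar, ybar) = -(lbar * ∑ k, xbar k * pderiv1 n f k xbar) := by
    rw [hC]
    simp only [hxx2]
    rw [Finset.mul_sum, ← Finset.sum_neg_distrib]
    refine Finset.sum_congr rfl fun k _ => ?_
    have hpk : pbar k = -(lbar * pderiv1 n f k xbar) := by linarith [hcrit k]
    show pbar k * xbar k = _
    rw [hpk]
    ring
  -- conclusion
  rw [h2nd, hCi_eq, hCj_eq, hCbase, hbi, hadjsym]
  show AES n f xbar i j = _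
  rw [AES, ← hBHdef]
  have hxi : xbar i ≠ 0 := (hxpos i).ne'
  have hxj : xbar j ≠ 0 := (hxpos j).ne'
  field_simp
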